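/- Let α, β, γ : ℝ → ℝ be continuous on an interval [s₀, s₁], with α differentiable on [s₀, s₁], α' continuous, and α(s) ≠ 0 for all s ∈ [s₀, s₁]. Let ρ : ℝ → ℝ be differentiable on [s₀, s₁] and satisfy α(s) ρ(s) ρ'(s) + β(s) ρ(s)² + γ(s) = 0 for all s ∈ [s₀, s₁]. Define δ := β − α' and Ψ(s) := ∫_{s₀}^{s} 2δ(σ)/α(σ) dσ. Then the function E(s) := (1/2) exp(Ψ(s)) α(s)² ρ(s)² satisfies E'(s) = −exp(Ψ(s)) α(s) γ(s) for all s ∈ (s₀, s₁). -/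

import Mathlib

open intervalIntegral

/-- Integrability of the reduced dynamics (differential form of equation (15)): along a
solution `ṡ = ρ(s)` of `α s̈ + β ṡ² + γ = 0`, the energy-like function
`E(s) = ½ exp(Ψ(s)) α(s)² ρ(s)²`, with `Ψ(s) = ∫_{s₀}^{s} 2(β−α')/α`, satisfies
`E' = −exp(Ψ) α γ` on the open interval. -/
theorem reduced_dynamics_energy_derivative
    (α β γ ρ α' ρ' : ℝ → ℝ) (s₀ s₁ : ℝ) (hlt : s₀ < s₁)
    (hαc : ContinuousOn α (Set.Icc s₀ s₁))
    (hβc : ContinuousOn β (Set.Icc s₀ s₁))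
    (hγc : ContinuousOn γ (Set.Icc s₀ s₁))
    (hα : ∀ x ∈ Set.Icc s₀ s₁, HasDerivAt α (α' x) x)
    (hα'c : ContinuousOn α' (Set.Icc s₀ s₁))
    (hαne : ∀ x ∈ Set.Icc s₀ s₁, α x ≠ 0)
    (hρ : ∀ x ∈ Set.Icc s₀ s₁, HasDerivAt ρ (ρ' x) x)
    (heq : ∀ x ∈ Set.Icc s₀ s₁,
      α x * ρ x * ρ' x + β x * (ρ x) ^ 2 + γ x = 0) :
    ∀ x ∈ Set.Ioo s₀ s₁,
      HasDerivAt
        (fun u => (1 / 2) * Real.exp (∫ σ in s₀..u, 2 * (β σ - α' σ) / α σ)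
          * (α u) ^ 2 * (ρ u) ^ 2)
        (-(Real.exp (∫ σ in s₀..x, 2 * (β σ - α' σ) / α σ) * α x * γ x)) x := by
  intro x hx
  have hxI : x ∈ Set.Icc s₀ s₁ := Set.Ioo_subset_Icc_self hx
  set f : ℝ → ℝ := fun σ => 2 * (β σ - α' σ) / α σ with hf
  have hfc : ContinuousOn f (Set.Icc s₀ s₁) :=
    (((continuousOn_const).mul (hβc.sub hα'c)).div hαc hαne)
  have hnhds : Set.Icc s₀ s₁ ∈ nhds x := Icc_mem_nhds hx.1 hx.2
  have hfx : ContinuousAt f x := hfc.continuousAt hnhds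
  have hint : IntervalIntegrable f MeasureTheory.volume s₀ x := by
    apply (hfc.mono _).intervalIntegrable
    rw [Set.uIcc_of_le hxI.1]
    exact Set.Icc_subset_Icc le_rfl hxI.2
  have hmeas : StronglyMeasurableAtFilter f (nhds x) :=
    ⟨Set.Icc s₀ s₁, hnhds, hfc.aestronglyMeasurable measurableSet_Icc⟩
  have hΨ : HasDerivAt (fun u => ∫ σ in s₀..u, f σ) (f x) x :=
    intervalIntegral.integral_hasDerivAt_right hint hmeas hfx
  have hE : HasDerivAt (fun u => Real.exp (∫ σ in s₀..u, f σ))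
      (Real.exp (∫ σ in s₀..x, f σ) * f x) x := hΨ.exp
  have hαx := hα x hxI
  have hρx := hρ x hxI
  have key := (((hE.const_mul (1/2)).mul (hαx.pow 2)).mul (hρx.pow 2))
  convert key using 1
  case e'_4 => rfl
  case e'_5 => rfl
  case e'_8 => rfl
  have hne := hαne x hxI
  have hγ : γ x = -(α x * ρ x * ρ' x + β x * ρ x ^ 2) := by
    have := heq x hxI; linarith
  rw [hγ, hf]
  simp only [Pi.mul_apply, Pi.pow_apply]
  field_simp
  ring
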